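/- arXiv:1906.01414 — 2 statements merged into one kernel-verified Lean document; each statement's English description precedes it below -/
import Mathlib

section
/- With the setup as above, for $a_1, a_2, a_3 \in \mathcal{O}_v$, the element $a_1 y + a_2 x + a_3 \in E = K(x)[y]/(dx^2 + ty^2 - 1)$ satisfies $\tilde{v}(a_1 y + a_2 x + a_3) = 0$ if and only if $\min\{v(a_1), v(a_2), v(a_3)\} = 0$. -/
/-- The minimal polynomial `y² - (1 - dx²)/t` of `y` over `K(x)`, whose adjunction gives the
function field `E = K(x)[y]/(dx² + ty² - 1)` of the conic `dx² + ty² = 1`. -/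
noncomputable def conicPoly (K : Type) [Field K] (d t : K) : Polynomial (RatFunc K) :=
  Polynomial.X ^ 2 - Polynomial.C ((1 - RatFunc.C d * RatFunc.X ^ 2) / RatFunc.C t)

section Aux

variable {Γ : Type*} [LinearOrderedCommGroupWithZero Γ]

lemma aux_eq_one_of_mul {a b : Γ} (h : a * b = 1) (ha : a ≤ 1) (hb : b ≤ 1) : a = 1 := by
  refine le_antisymm ha ?_
  calc (1 : Γ) = a * b := h.symm
    _ ≤ a * 1 := mul_le_mul_right hb a
    _ = a := mul_one a

lemma aux_mul_lt_one {a b : Γ} (ha : a < 1) (hb : b ≤ 1) : a * b < 1 :=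
  lt_of_le_of_lt (by calc a * b ≤ a * 1 := mul_le_mul_right hb a
                      _ = a := mul_one a) ha

lemma aux_sq_eq_one {a : Γ} (h : a * a = 1) : a = 1 := by
  rcases lt_trichotomy a 1 with h1 | h1 | h1
  · exact absurd h (ne_of_lt (aux_mul_lt_one h1 h1.le))
  · exact h1
  · have h2 : a ≤ a * a := by
      calc a = a * 1 := (mul_one a).symm
        _ ≤ a * a := mul_le_mul_right h1.le a
    exact absurd h (ne_of_gt (lt_of_lt_of_le h1 h2))

lemma aux_lt_of_sq_lt {a : Γ} (ha : a ≤ 1) (h : a * a < 1) : a < 1 := by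
  rcases lt_or_eq_of_le ha with h1 | h1
  · exact h1
  · rw [h1] at h ⊢; simpa using h

end Aux

/-- With `K` complete discretely valued of residue characteristic `≠ 2`, `d,t`
units, residue conic nonsplit, and `ṽ` the extension to `E = K(x)[y]/(dx²+ty²-1)` of the Gauss
valuation `v'` on `K(x)`: for `a₁, a₂, a₃` in the valuation ring, `ṽ(a₁y + a₂x + a₃) = 0`
(multiplicatively `= 1`) iff `min{v(a₁), v(a₂), v(a₃)} = 0` (multiplicatively
`max{v(a₁),v(a₂),v(a₃)} = 1`). -/
theorem stmt9 (K : Type) [Field K] [Valued K (WithZero (Multiplicative ℤ))] [CompleteSpace K]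
    (hdisc : Function.Surjective (Valued.v : Valuation K (WithZero (Multiplicative ℤ))))
    (hres : (2 : IsLocalRing.ResidueField
      ((Valued.v : Valuation K (WithZero (Multiplicative ℤ))).valuationSubring)) ≠ 0)
    (d t : K) (hd : Valued.v d = 1) (ht : Valued.v t = 1)
    [hirr : Fact (Irreducible (conicPoly K d t))]
    (hirrres : Irreducible (conicPoly
      (IsLocalRing.ResidueField
        ((Valued.v : Valuation K (WithZero (Multiplicative ℤ))).valuationSubring))
      (IsLocalRing.residue _ ⟨d, le_of_eq hd⟩) (IsLocalRing.residue _ ⟨t, le_of_eq ht⟩)))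
    (v' : Valuation (RatFunc K) (WithZero (Multiplicative ℤ)))
    (hv' : ∀ p : Polynomial K,
      v' (algebraMap (Polynomial K) (RatFunc K) p) = p.support.sup fun l => Valued.v (p.coeff l))
    (Γ : Type) [LinearOrderedCommGroupWithZero Γ]
    (w : Valuation (AdjoinRoot (conicPoly K d t)) Γ)
    (e : (WithZero (Multiplicative ℤ)) →*₀ Γ) (he : StrictMono e)
    (hcomp : ∀ g : RatFunc K,
      w (algebraMap (RatFunc K) (AdjoinRoot (conicPoly K d t)) g) = e (v' g))
    (a₁ a₂ a₃ : K) (ha₁ : Valued.v a₁ ≤ 1) (ha₂ : Valued.v a₂ ≤ 1) (ha₃ : Valued.v a₃ ≤ 1) :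
    w (algebraMap (RatFunc K) (AdjoinRoot (conicPoly K d t)) (RatFunc.C a₁) *
        AdjoinRoot.root (conicPoly K d t) +
      algebraMap (RatFunc K) (AdjoinRoot (conicPoly K d t))
        (RatFunc.C a₂ * RatFunc.X + RatFunc.C a₃)) = 1 ↔
    max (Valued.v a₁) (max (Valued.v a₂) (Valued.v a₃)) = 1 := by
  classical
  set vK : Valuation K (WithZero (Multiplicative ℤ)) := Valued.v with hvKdef
  have ht0 : t ≠ 0 := by
    intro h; rw [h] at ht; simp at ht
  have hd0 : d ≠ 0 := by
    intro h; rw [h] at hd; simp at hd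
  -- the valuation of 2 is 1 (residue characteristic ≠ 2)
  have h2le : vK 2 ≤ 1 := by
    have h11 : (2 : K) = 1 + 1 := by norm_num
    rw [h11]
    refine le_trans (vK.map_add 1 1) ?_
    simp
  have h2 : vK 2 = 1 := by
    have hu : IsUnit (2 : vK.valuationSubring) := by
      by_contra hns
      apply hres
      have hmem : (2 : vK.valuationSubring) ∈ IsLocalRing.maximalIdeal _ :=
        (IsLocalRing.mem_maximalIdeal _).mpr hns
      calc (2 : IsLocalRing.ResidueField vK.valuationSubring)
          = IsLocalRing.residue vK.valuationSubring 2 := (map_ofNat _ 2).symm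
        _ = 0 := Ideal.Quotient.eq_zero_iff_mem.mpr hmem
    obtain ⟨z, hz⟩ := isUnit_iff_exists_inv.mp hu
    have hzK : (2 : K) * (z : K) = 1 := by
      have h' := congrArg Subtype.val hz
      push_cast at h'
      exact h'
    have hzle : vK (z : K) ≤ 1 := z.2
    have : vK 2 * vK (z : K) = 1 := by rw [← vK.map_mul, hzK, vK.map_one]
    exact aux_eq_one_of_mul this h2le hzle
  -- values of constants and X under the Gauss valuation
  have hvC : ∀ a : K, v' (RatFunc.C a) = vK a := by
    intro a
    rcases eq_or_ne a 0 with rfl | ha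
    · simp
    · rw [← RatFunc.algebraMap_C, hv', Polynomial.support_C ha, Finset.sup_singleton]
      simp
  have hvX : v' RatFunc.X = 1 := by
    rw [← RatFunc.algebraMap_X, hv', Polynomial.support_X,
      Finset.sup_singleton]
    simp
  have hvpoly : ∀ (p : Polynomial K) (n0 : ℕ), (∀ n, vK (p.coeff n) ≤ 1) →
      vK (p.coeff n0) = 1 → v' (algebraMap (Polynomial K) (RatFunc K) p) = 1 := by
    intro p n0 hle h1
    rw [hv']
    refine le_antisymm (Finset.sup_le fun l _ => hle l) ?_
    rw [← h1]
    have hmem : n0 ∈ p.support := by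
      rw [Polynomial.mem_support_iff]
      intro h
      rw [h] at h1
      simp at h1
    exact Finset.le_sup (f := fun l => vK (p.coeff l)) hmem
  -- the square of the root
  have hroot : AdjoinRoot.root (conicPoly K d t) ^ 2
      = algebraMap (RatFunc K) (AdjoinRoot (conicPoly K d t))
        ((1 - RatFunc.C d * RatFunc.X ^ 2) / RatFunc.C t) := by
    have h0 := AdjoinRoot.eval₂_root (conicPoly K d t)
    rw [conicPoly] at h0
    simp only [Polynomial.eval₂_sub, Polynomial.eval₂_pow, Polynomial.eval₂_X,
      Polynomial.eval₂_C] at h0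
    rw [sub_eq_zero] at h0
    rw [AdjoinRoot.algebraMap_eq]
    exact h0
  -- the Gauss valuation of 1 - d x²
  have hnum : v' (1 - RatFunc.C d * RatFunc.X ^ 2) = 1 := by
    have hrepr : (1 - RatFunc.C d * RatFunc.X ^ 2 : RatFunc K)
        = algebraMap (Polynomial K) (RatFunc K) (1 - Polynomial.C d * Polynomial.X ^ 2) := by
      rw [map_sub, map_one, map_mul, map_pow, RatFunc.algebraMap_C, RatFunc.algebraMap_X]
    rw [hrepr]
    refine hvpoly _ 0 ?_ ?_
    · intro n
      simp only [Polynomial.coeff_sub, Polynomial.coeff_one, Polynomial.coeff_C_mul,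
        Polynomial.coeff_X_pow]
      split_ifs
      · refine le_trans (vK.map_sub _ _) (max_le (le_of_eq vK.map_one) ?_)
        rw [mul_one, hd]
      · rw [mul_zero, sub_zero]
        exact le_of_eq vK.map_one
      · rw [mul_one, zero_sub, vK.map_neg, hd]
      · rw [mul_zero, sub_zero, vK.map_zero]
        exact zero_le_one
    · simp only [Polynomial.coeff_sub, Polynomial.coeff_one, Polynomial.coeff_C_mul,
        Polynomial.coeff_X_pow]
      norm_num
  have hwroot : w (AdjoinRoot.root (conicPoly K d t)) = 1 := by
    apply aux_sq_eq_one
    rw [← w.map_mul, ← sq, hroot, hcomp, map_div₀, hnum, hvC, ht, div_one, map_one]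
  -- general upper bound
  have hwle : ∀ b₁ b₂ b₃ : K, vK b₁ ≤ 1 → vK b₂ ≤ 1 → vK b₃ ≤ 1 →
      w (algebraMap (RatFunc K) (AdjoinRoot (conicPoly K d t)) (RatFunc.C b₁) *
          AdjoinRoot.root (conicPoly K d t) +
        algebraMap (RatFunc K) (AdjoinRoot (conicPoly K d t))
          (RatFunc.C b₂ * RatFunc.X + RatFunc.C b₃)) ≤ 1 := by
    intro b₁ b₂ b₃ h1 h2' h3'
    refine le_trans (w.map_add _ _) (max_le ?_ ?_)
    · rw [w.map_mul, hcomp, hvC, hwroot, mul_one]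
      calc e (vK b₁) ≤ e 1 := he.monotone h1
        _ = 1 := map_one e
    · rw [hcomp]
      have hb : v' (RatFunc.C b₂ * RatFunc.X + RatFunc.C b₃) ≤ 1 := by
        refine le_trans (v'.map_add _ _) (max_le ?_ ?_)
        · rw [v'.map_mul, hvC, hvX, mul_one]; exact h2'
        · rw [hvC]; exact h3'
      calc e (v' (RatFunc.C b₂ * RatFunc.X + RatFunc.C b₃)) ≤ e 1 := he.monotone hb
        _ = 1 := map_one e
  constructor
  · -- forward direction: if all valuations < 1, then w α < 1
    intro hw
    by_contra hmax
    have hle : max (vK a₁) (max (vK a₂) (vK a₃)) ≤ 1 := max_le ha₁ (max_le ha₂ ha₃)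
    have hlt := lt_of_le_of_ne hle hmax
    rw [max_lt_iff, max_lt_iff] at hlt
    obtain ⟨l1, l2, l3⟩ := hlt
    have hwa : w (algebraMap (RatFunc K) (AdjoinRoot (conicPoly K d t)) (RatFunc.C a₁) *
        AdjoinRoot.root (conicPoly K d t) +
      algebraMap (RatFunc K) (AdjoinRoot (conicPoly K d t))
        (RatFunc.C a₂ * RatFunc.X + RatFunc.C a₃)) < 1 := by
      refine lt_of_le_of_lt (w.map_add _ _) (max_lt ?_ ?_)
      · rw [w.map_mul, hcomp, hvC, hwroot, mul_one]
        calc e (vK a₁) < e 1 := he l1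
          _ = 1 := map_one e
      · rw [hcomp]
        have hb : v' (RatFunc.C a₂ * RatFunc.X + RatFunc.C a₃) < 1 := by
          refine lt_of_le_of_lt (v'.map_add _ _) (max_lt ?_ ?_)
          · rw [v'.map_mul, hvC, hvX, mul_one]; exact l2
          · rw [hvC]; exact l3
        calc e (v' (RatFunc.C a₂ * RatFunc.X + RatFunc.C a₃)) < e 1 := he hb
          _ = 1 := map_one e
    exact absurd hw (ne_of_lt hwa)
  · -- backward direction: use the conjugate
    intro hmax
    -- coefficient bounds
    have hb₀ : vK (t * a₃ ^ 2 - a₁ ^ 2) ≤ 1 := by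
      refine le_trans (vK.map_sub _ _) (max_le ?_ ?_)
      · rw [vK.map_mul, ht, one_mul, vK.map_pow]
        exact pow_le_one' ha₃ 2
      · rw [vK.map_pow]; exact pow_le_one' ha₁ 2
    have hb₁ : vK (2 * (t * (a₂ * a₃))) ≤ 1 := by
      rw [vK.map_mul, vK.map_mul, vK.map_mul, h2, ht, one_mul, one_mul]
      calc vK a₂ * vK a₃ ≤ 1 * 1 := mul_le_mul' ha₂ ha₃
        _ = 1 := one_mul 1
    have hb₂ : vK (t * a₂ ^ 2 + a₁ ^ 2 * d) ≤ 1 := by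
      refine le_trans (vK.map_add _ _) (max_le ?_ ?_)
      · rw [vK.map_mul, ht, one_mul, vK.map_pow]
        exact pow_le_one' ha₂ 2
      · rw [vK.map_mul, hd, mul_one, vK.map_pow]
        exact pow_le_one' ha₁ 2
    -- the key combinatorial statement: one of the coefficients is a unit
    have hone : vK (t * a₃ ^ 2 - a₁ ^ 2) = 1 ∨ vK (2 * (t * (a₂ * a₃))) = 1 ∨
        vK (t * a₂ ^ 2 + a₁ ^ 2 * d) = 1 := by
      by_contra hno
      push_neg at hno
      obtain ⟨n0, n1, n2⟩ := hno
      have l0 : vK (t * a₃ ^ 2 - a₁ ^ 2) < 1 := lt_of_le_of_ne hb₀ n0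
      have l1 : vK (2 * (t * (a₂ * a₃))) < 1 := lt_of_le_of_ne hb₁ n1
      have l2 : vK (t * a₂ ^ 2 + a₁ ^ 2 * d) < 1 := lt_of_le_of_ne hb₂ n2
      rcases lt_or_eq_of_le ha₃ with h3 | h3
      · -- v a₃ < 1
        have hA1 : vK a₁ < 1 := by
          refine aux_lt_of_sq_lt ha₁ ?_
          have heq : a₁ ^ 2 = t * a₃ ^ 2 - (t * a₃ ^ 2 - a₁ ^ 2) := by ring
          have : vK (a₁ ^ 2) < 1 := by
            rw [heq]
            refine lt_of_le_of_lt (vK.map_sub _ _) (max_lt ?_ l0)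
            rw [vK.map_mul, ht, one_mul, vK.map_pow, sq]
            exact aux_mul_lt_one h3 ha₃
          rwa [vK.map_pow, sq] at this
        have hA2 : vK a₂ < 1 := by
          refine aux_lt_of_sq_lt ha₂ ?_
          have heq : t * a₂ ^ 2 = (t * a₂ ^ 2 + a₁ ^ 2 * d) - a₁ ^ 2 * d := by ring
          have h1' : vK (t * a₂ ^ 2) < 1 := by
            rw [heq]
            refine lt_of_le_of_lt (vK.map_sub _ _) (max_lt l2 ?_)
            rw [vK.map_mul, hd, mul_one, vK.map_pow, sq]
            exact aux_mul_lt_one hA1 hA1.le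
          rwa [vK.map_mul, ht, one_mul, vK.map_pow, sq] at h1'
        have : max (vK a₁) (max (vK a₂) (vK a₃)) < 1 := max_lt hA1 (max_lt hA2 h3)
        rw [hmax] at this
        exact lt_irrefl 1 this
      · -- v a₃ = 1
        have hA2 : vK a₂ < 1 := by
          rwa [vK.map_mul, vK.map_mul, vK.map_mul, h2, ht, h3, one_mul, one_mul, mul_one] at l1
        have hA1 : vK a₁ < 1 := by
          refine aux_lt_of_sq_lt ha₁ ?_
          have heq : a₁ ^ 2 * d = (t * a₂ ^ 2 + a₁ ^ 2 * d) - t * a₂ ^ 2 := by ring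
          have h1' : vK (a₁ ^ 2 * d) < 1 := by
            rw [heq]
            refine lt_of_le_of_lt (vK.map_sub _ _) (max_lt l2 ?_)
            rw [vK.map_mul, ht, one_mul, vK.map_pow, sq]
            exact aux_mul_lt_one hA2 ha₂
          rwa [vK.map_mul, hd, mul_one, vK.map_pow, sq] at h1'
        have hcontr : vK (t * a₃ ^ 2) < 1 := by
          have heq : t * a₃ ^ 2 = (t * a₃ ^ 2 - a₁ ^ 2) + a₁ ^ 2 := by ring
          rw [heq]
          refine lt_of_le_of_lt (vK.map_add _ _) (max_lt l0 ?_)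
          rw [vK.map_pow, sq]
          exact aux_mul_lt_one hA1 ha₁
        rw [vK.map_mul, ht, one_mul, vK.map_pow, h3, one_pow] at hcontr
        exact lt_irrefl 1 hcontr
    -- the product with the conjugate
    have key : (RatFunc.C a₂ * RatFunc.X + RatFunc.C a₃) ^ 2
        - RatFunc.C a₁ ^ 2 * ((1 - RatFunc.C d * RatFunc.X ^ 2) / RatFunc.C t)
        = (RatFunc.C (t * a₂ ^ 2 + a₁ ^ 2 * d) * RatFunc.X ^ 2
            + RatFunc.C (2 * (t * (a₂ * a₃))) * RatFunc.X
            + RatFunc.C (t * a₃ ^ 2 - a₁ ^ 2)) / RatFunc.C t := by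
      have hCt : (RatFunc.C t : RatFunc K) ≠ 0 := by
        rw [← RatFunc.algebraMap_C]
        exact RatFunc.algebraMap_ne_zero (by simpa using ht0)
      field_simp
      push_cast [map_add, map_sub, map_mul, map_pow, map_ofNat, map_one]
      ring
    have hg : v' ((RatFunc.C a₂ * RatFunc.X + RatFunc.C a₃) ^ 2
        - RatFunc.C a₁ ^ 2 * ((1 - RatFunc.C d * RatFunc.X ^ 2) / RatFunc.C t)) = 1 := by
      rw [key, map_div₀, hvC, ht, div_one]
      set P : Polynomial K := Polynomial.C (t * a₂ ^ 2 + a₁ ^ 2 * d) * Polynomial.X ^ 2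
          + Polynomial.C (2 * (t * (a₂ * a₃))) * Polynomial.X
          + Polynomial.C (t * a₃ ^ 2 - a₁ ^ 2) with hP
      have hco0 : P.coeff 0 = t * a₃ ^ 2 - a₁ ^ 2 := by
        rw [hP]
        simp only [Polynomial.coeff_add, Polynomial.coeff_C_mul, Polynomial.coeff_X_pow,
          Polynomial.coeff_X, Polynomial.coeff_C]
        norm_num
      have hco1 : P.coeff 1 = 2 * (t * (a₂ * a₃)) := by
        rw [hP]
        simp only [Polynomial.coeff_add, Polynomial.coeff_C_mul, Polynomial.coeff_X_pow,
          Polynomial.coeff_X, Polynomial.coeff_C]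
        norm_num
      have hco2 : P.coeff 2 = t * a₂ ^ 2 + a₁ ^ 2 * d := by
        rw [hP]
        simp only [Polynomial.coeff_add, Polynomial.coeff_C_mul, Polynomial.coeff_X_pow,
          Polynomial.coeff_X, Polynomial.coeff_C]
        norm_num
      have hco3 : ∀ m : ℕ, P.coeff (m + 3) = 0 := by
        intro m
        rw [hP]
        simp only [Polynomial.coeff_add, Polynomial.coeff_C_mul, Polynomial.coeff_X_pow,
          Polynomial.coeff_X, Polynomial.coeff_C]
        rw [if_neg (by omega), if_neg (by omega), if_neg (by omega)]
        ring
      have hrepr : (RatFunc.C (t * a₂ ^ 2 + a₁ ^ 2 * d) * RatFunc.X ^ 2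
            + RatFunc.C (2 * (t * (a₂ * a₃))) * RatFunc.X
            + RatFunc.C (t * a₃ ^ 2 - a₁ ^ 2) : RatFunc K)
          = algebraMap (Polynomial K) (RatFunc K) P := by
        rw [hP]
        simp only [map_add, map_mul, map_pow, map_sub, map_ofNat,
          RatFunc.algebraMap_C, RatFunc.algebraMap_X]
      rw [hrepr]
      have hcoeffle : ∀ n, vK (P.coeff n) ≤ 1 := by
        intro n
        match n with
        | 0 => rw [hco0]; exact hb₀
        | 1 => rw [hco1]; exact hb₁
        | 2 => rw [hco2]; exact hb₂
        | (m + 3) => rw [hco3 m, vK.map_zero]; exact zero_le_one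
      rcases hone with h | h | h
      · exact hvpoly P 0 hcoeffle (by rw [hco0]; exact h)
      · exact hvpoly P 1 hcoeffle (by rw [hco1]; exact h)
      · exact hvpoly P 2 hcoeffle (by rw [hco2]; exact h)
    have hprod : (algebraMap (RatFunc K) (AdjoinRoot (conicPoly K d t)) (RatFunc.C a₁) *
          AdjoinRoot.root (conicPoly K d t) +
        algebraMap (RatFunc K) (AdjoinRoot (conicPoly K d t))
          (RatFunc.C a₂ * RatFunc.X + RatFunc.C a₃)) *
        (algebraMap (RatFunc K) (AdjoinRoot (conicPoly K d t)) (RatFunc.C (-a₁)) *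
          AdjoinRoot.root (conicPoly K d t) +
        algebraMap (RatFunc K) (AdjoinRoot (conicPoly K d t))
          (RatFunc.C a₂ * RatFunc.X + RatFunc.C a₃))
        = algebraMap (RatFunc K) (AdjoinRoot (conicPoly K d t))
          ((RatFunc.C a₂ * RatFunc.X + RatFunc.C a₃) ^ 2
            - RatFunc.C a₁ ^ 2 * ((1 - RatFunc.C d * RatFunc.X ^ 2) / RatFunc.C t)) := by
      rw [map_sub, map_mul, map_pow, map_pow, ← hroot]
      have hn : (RatFunc.C (-a₁) : RatFunc K) = -(RatFunc.C a₁) := map_neg _ _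
      rw [hn, map_neg]
      ring
    have hwprod : w (algebraMap (RatFunc K) (AdjoinRoot (conicPoly K d t)) (RatFunc.C a₁) *
          AdjoinRoot.root (conicPoly K d t) +
        algebraMap (RatFunc K) (AdjoinRoot (conicPoly K d t))
          (RatFunc.C a₂ * RatFunc.X + RatFunc.C a₃)) *
        w (algebraMap (RatFunc K) (AdjoinRoot (conicPoly K d t)) (RatFunc.C (-a₁)) *
          AdjoinRoot.root (conicPoly K d t) +
        algebraMap (RatFunc K) (AdjoinRoot (conicPoly K d t))
          (RatFunc.C a₂ * RatFunc.X + RatFunc.C a₃)) = 1 := by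
      rw [← w.map_mul, hprod, hcomp, hg, map_one]
    exact aux_eq_one_of_mul hwprod (hwle a₁ a₂ a₃ ha₁ ha₂ ha₃)
      (hwle (-a₁) a₂ a₃ (by rwa [vK.map_neg]) ha₂ ha₃)
end

section
/- Let $Q = (d,t)$ be a quaternion algebra over a field $K$ of characteristic $\neq 2$ with basis $1, i, j, ij$ where $i^2 = d$, $j^2 = t$, $ij = -ji$. Let $L$ be the fraction field of $K[x,y]/(dx^2+ty^2-1)$. Then the $K$-algebra map sending $i \mapsto \begin{pmatrix} dx & -y \\ -dty & -dx \end{pmatrix}$, $j \mapsto \begin{pmatrix} ty & x \\ dtx & -ty \end{pmatrix}$, $ij \mapsto \begin{pmatrix} 0 & 1 \\ -dt & 0 \end{pmatrix}$ extends to an isomorphism of $L$-algebras $Q \otimes_K L \cong M_2(L)$. -/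
open scoped Quaternion TensorProduct

/-- The coordinate ring `K[x,y]/(dx² + ty² - 1)` of the conic associated to the quaternion
algebra `(d,t)_K`. -/
abbrev ConicRing (K : Type) [Field K] (d t : K) : Type :=
  MvPolynomial (Fin 2) K ⧸
    Ideal.span {MvPolynomial.C d * MvPolynomial.X 0 ^ 2 +
      MvPolynomial.C t * MvPolynomial.X 1 ^ 2 - 1}

set_option synthInstance.maxHeartbeats 1000000 in
set_option maxHeartbeats 2000000 in
/-- Over the function field `L` of the conic `dx² + ty² = 1` (the fraction field of
`K[x,y]/(dx²+ty²-1)`), the quaternion algebra `Q = (d,t)_K` splits: the map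
`i ↦ [[dx,-y],[-dty,-dx]]`, `j ↦ [[ty,x],[dtx,-ty]]`, `ij ↦ [[0,1],[-dt,0]]` extends to an
isomorphism of `L`-algebras `Q ⊗_K L ≅ M₂(L)`. -/
theorem stmt11 (K : Type) [Field K] (h2 : (2 : K) ≠ 0) (d t : K) (hd : d ≠ 0) (ht : t ≠ 0)
    (L : Type) [Field L] [Algebra (ConicRing K d t) L]
    [IsFractionRing (ConicRing K d t) L] [Algebra K L]
    [IsScalarTower K (ConicRing K d t) L]
    (x y : L)
    (hx : x = algebraMap (ConicRing K d t) L
      (Ideal.Quotient.mk _ (MvPolynomial.X 0)))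
    (hy : y = algebraMap (ConicRing K d t) L
      (Ideal.Quotient.mk _ (MvPolynomial.X 1))) :
    ∃ φ : (L ⊗[K] ℍ[K, d, t]) ≃ₐ[L] Matrix (Fin 2) (Fin 2) L,
      φ (1 ⊗ₜ (⟨0, 1, 0, 0⟩ : ℍ[K, d, t])) =
        !![algebraMap K L d * x, -y; -(algebraMap K L (d * t)) * y, -(algebraMap K L d * x)] ∧
      φ (1 ⊗ₜ (⟨0, 0, 1, 0⟩ : ℍ[K, d, t])) =
        !![algebraMap K L t * y, x; algebraMap K L (d * t) * x, -(algebraMap K L t * y)] ∧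
      φ (1 ⊗ₜ (⟨0, 0, 0, 1⟩ : ℍ[K, d, t])) =
        !![0, 1; -(algebraMap K L (d * t)), 0] := by
  have hinj := (algebraMap K L).injective
  have hdL : algebraMap K L d ≠ 0 := fun h => hd (hinj (by rw [h, map_zero]))
  have htL : algebraMap K L t ≠ 0 := fun h => ht (hinj (by rw [h, map_zero]))
  have h2L : (2 : L) ≠ 0 := fun h => h2 (hinj (by rw [map_ofNat, h, map_zero]))
  -- the conic relation in L
  have key : algebraMap K L d * x ^ 2 + algebraMap K L t * y ^ 2 = 1 := by
    have hC : ∀ c : K, (algebraMap (ConicRing K d t) L)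
        (Ideal.Quotient.mk _ (MvPolynomial.C c)) = algebraMap K L c := by
      intro c
      rw [show (Ideal.Quotient.mk _ (MvPolynomial.C c) : ConicRing K d t)
          = algebraMap K (ConicRing K d t) c from by
        rw [IsScalarTower.algebraMap_apply K (MvPolynomial (Fin 2) K) (ConicRing K d t),
          MvPolynomial.algebraMap_eq, Ideal.Quotient.algebraMap_eq],
        ← IsScalarTower.algebraMap_apply]
    have h0 : (Ideal.Quotient.mk _ (MvPolynomial.C d * MvPolynomial.X 0 ^ 2 +
        MvPolynomial.C t * MvPolynomial.X 1 ^ 2 - 1) : ConicRing K d t) = 0 :=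
      Ideal.Quotient.eq_zero_iff_mem.mpr (Ideal.subset_span rfl)
    have h1 := congrArg (algebraMap (ConicRing K d t) L) h0
    rw [map_zero] at h1
    simp only [map_sub, map_add, map_mul, map_pow, map_one, hC] at h1
    rw [← hx, ← hy, sub_eq_zero] at h1
    exact h1
  -- the quaternionic basis of matrices
  let qb : QuaternionAlgebra.Basis (Matrix (Fin 2) (Fin 2) L) d 0 t :=
    { i := !![algebraMap K L d * x, -y; -(algebraMap K L (d * t)) * y, -(algebraMap K L d * x)]
      j := !![algebraMap K L t * y, x; algebraMap K L (d * t) * x, -(algebraMap K L t * y)]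
      k := !![0, 1; -(algebraMap K L (d * t)), 0]
      i_mul_i := by
        ext i j
        fin_cases i <;> fin_cases j <;>
          simp [Matrix.mul_apply, Fin.sum_univ_two, Algebra.smul_def, map_mul, Matrix.algebraMap_matrix_apply] <;>
          first
            | ring1
            | linear_combination (algebraMap K L d) * key
            | linear_combination (algebraMap K L t) * key
            | linear_combination key
            | linear_combination (-(algebraMap K L d * algebraMap K L t)) * key
            | linear_combination (algebraMap K L d * algebraMap K L t) * key
      j_mul_j := by
        ext i j
        fin_cases i <;> fin_cases j <;>
          simp [Matrix.mul_apply, Fin.sum_univ_two, Algebra.smul_def, map_mul] <;>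
          first
            | ring1
            | linear_combination (algebraMap K L d) * key
            | linear_combination (algebraMap K L t) * key
            | linear_combination key
            | linear_combination (-(algebraMap K L d * algebraMap K L t)) * key
            | linear_combination (algebraMap K L d * algebraMap K L t) * key
      i_mul_j := by
        ext i j
        fin_cases i <;> fin_cases j <;>
          simp [Matrix.mul_apply, Fin.sum_univ_two, Algebra.smul_def, map_mul] <;>
          first
            | ring1
            | linear_combination (algebraMap K L d) * key
            | linear_combination (algebraMap K L t) * key
            | linear_combination key
            | linear_combination (-(algebraMap K L d * algebraMap K L t)) * key
            | linear_combination (algebraMap K L d * algebraMap K L t) * key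
      j_mul_i := by
        ext i j
        fin_cases i <;> fin_cases j <;>
          simp [Matrix.mul_apply, Fin.sum_univ_two, Algebra.smul_def, map_mul] <;>
          first
            | ring1
            | linear_combination (algebraMap K L d) * key
            | linear_combination (algebraMap K L t) * key
            | linear_combination key
            | linear_combination (-key)
            | linear_combination (-(algebraMap K L d * algebraMap K L t)) * key
            | linear_combination (algebraMap K L d * algebraMap K L t) * key }
  let g : ℍ[K,d,t] →ₐ[K] Matrix (Fin 2) (Fin 2) L := qb.liftHom
  let f : (L ⊗[K] ℍ[K,d,t]) →ₐ[L] Matrix (Fin 2) (Fin 2) L :=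
    Algebra.TensorProduct.lift (Algebra.ofId L _) g
      (fun a q => by simpa [Algebra.ofId_apply] using (Algebra.commute_algebraMap_left a (g q)))
  have hqi : qb.i = !![algebraMap K L d * x, -y;
      -(algebraMap K L (d * t)) * y, -(algebraMap K L d * x)] := rfl
  have hqj : qb.j = !![algebraMap K L t * y, x;
      algebraMap K L (d * t) * x, -(algebraMap K L t * y)] := rfl
  have hqk : qb.k = !![0, 1; -(algebraMap K L (d * t)), 0] := rfl
  have hfi : f (1 ⊗ₜ (⟨0, 1, 0, 0⟩ : ℍ[K, d, t])) = qb.i := by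
    simp [f, Algebra.TensorProduct.lift_tmul, g, QuaternionAlgebra.Basis.liftHom_apply,
      QuaternionAlgebra.Basis.lift]
  have hfj : f (1 ⊗ₜ (⟨0, 0, 1, 0⟩ : ℍ[K, d, t])) = qb.j := by
    simp [f, Algebra.TensorProduct.lift_tmul, g, QuaternionAlgebra.Basis.liftHom_apply,
      QuaternionAlgebra.Basis.lift]
  have hfk : f (1 ⊗ₜ (⟨0, 0, 0, 1⟩ : ℍ[K, d, t])) = qb.k := by
    simp [f, Algebra.TensorProduct.lift_tmul, g, QuaternionAlgebra.Basis.liftHom_apply,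
      QuaternionAlgebra.Basis.lift]
  have hIr : qb.i ∈ f.range := ⟨_, hfi⟩
  have hJr : qb.j ∈ f.range := ⟨_, hfj⟩
  have hKr : qb.k ∈ f.range := ⟨_, hfk⟩
  have hD : (!![1, 0; 0, -1] : Matrix (Fin 2) (Fin 2) L) ∈ f.range := by
    have hDeq : (!![1, 0; 0, -1] : Matrix (Fin 2) (Fin 2) L) = x • qb.i + y • qb.j := by
      rw [hqi, hqj]
      ext i j
      fin_cases i <;> fin_cases j <;> simp [map_mul] <;> first
          | ring1
          | linear_combination key
          | linear_combination (-key)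
          | linear_combination (2:L) * key
          | linear_combination (-(2:L)) * key
          | linear_combination (algebraMap K L d * algebraMap K L t) * key
          | linear_combination (-(algebraMap K L d * algebraMap K L t)) * key
    rw [hDeq]
    exact add_mem (f.range.smul_mem hIr x) (f.range.smul_mem hJr y)
  have hB : (!![0, -1; -(algebraMap K L d * algebraMap K L t), 0] :
      Matrix (Fin 2) (Fin 2) L) ∈ f.range := by
    have hBeq : (!![0, -1; -(algebraMap K L d * algebraMap K L t), 0] :
        Matrix (Fin 2) (Fin 2) L)
        = (algebraMap K L t * y) • qb.i - (algebraMap K L d * x) • qb.j := by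
      rw [hqi, hqj]
      ext i j
      fin_cases i <;> fin_cases j <;> simp [map_mul] <;> first
          | ring1
          | linear_combination key
          | linear_combination (-key)
          | linear_combination (2:L) * key
          | linear_combination (-(2:L)) * key
          | linear_combination (algebraMap K L d * algebraMap K L t) * key
          | linear_combination (-(algebraMap K L d * algebraMap K L t)) * key
    rw [hBeq]
    exact sub_mem (f.range.smul_mem hIr _) (f.range.smul_mem hJr _)
  have hE00 : (!![1, 0; 0, 0] : Matrix (Fin 2) (Fin 2) L) ∈ f.range := by
    have : (!![1, 0; 0, 0] : Matrix (Fin 2) (Fin 2) L)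
        = (2 : L)⁻¹ • ((1 : Matrix (Fin 2) (Fin 2) L) + !![1, 0; 0, -1]) := by
      rw [Matrix.one_fin_two]
      ext i j
      fin_cases i <;> fin_cases j <;> (try simp) <;> (field_simp; try ring1)
    rw [this]
    exact f.range.smul_mem (add_mem (one_mem _) hD) _
  have hE11 : (!![0, 0; 0, 1] : Matrix (Fin 2) (Fin 2) L) ∈ f.range := by
    have : (!![0, 0; 0, 1] : Matrix (Fin 2) (Fin 2) L)
        = (2 : L)⁻¹ • ((1 : Matrix (Fin 2) (Fin 2) L) - !![1, 0; 0, -1]) := by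
      rw [Matrix.one_fin_two]
      ext i j
      fin_cases i <;> fin_cases j <;> (try simp) <;> (field_simp; try ring1)
    rw [this]
    exact f.range.smul_mem (sub_mem (one_mem _) hD) _
  have hE01 : (!![0, 1; 0, 0] : Matrix (Fin 2) (Fin 2) L) ∈ f.range := by
    have : (!![0, 1; 0, 0] : Matrix (Fin 2) (Fin 2) L)
        = (2 : L)⁻¹ • (qb.k - !![0, -1; -(algebraMap K L d * algebraMap K L t), 0]) := by
      rw [hqk]
      ext i j
      fin_cases i <;> fin_cases j <;> simp [map_mul] <;> (field_simp; try ring1)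
    rw [this]
    exact f.range.smul_mem (sub_mem hKr hB) _
  have hE10 : (!![0, 0; 1, 0] : Matrix (Fin 2) (Fin 2) L) ∈ f.range := by
    have : (!![0, 0; 1, 0] : Matrix (Fin 2) (Fin 2) L)
        = (-(2 * (algebraMap K L d * algebraMap K L t)))⁻¹ •
          (qb.k + !![0, -1; -(algebraMap K L d * algebraMap K L t), 0]) := by
      rw [hqk]
      ext i j
      fin_cases i <;> fin_cases j <;> simp [map_mul] <;> (field_simp; try ring1)
    rw [this]
    exact f.range.smul_mem (add_mem hKr hB) _
  have hsurj : Function.Surjective f := by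
    intro M
    have hM : M ∈ f.range := by
      rw [Matrix.eta_fin_two M,
        show (!![M 0 0, M 0 1; M 1 0, M 1 1] : Matrix (Fin 2) (Fin 2) L)
          = M 0 0 • !![1, 0; 0, 0] + M 0 1 • !![0, 1; 0, 0] + M 1 0 • !![0, 0; 1, 0]
            + M 1 1 • !![0, 0; 0, 1] from by
          ext i j; fin_cases i <;> fin_cases j <;> simp]
      exact add_mem (add_mem (add_mem (f.range.smul_mem hE00 _) (f.range.smul_mem hE01 _))
        (f.range.smul_mem hE10 _)) (f.range.smul_mem hE11 _)
    exact hM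
  have hfr : Module.finrank L (L ⊗[K] ℍ[K,d,t]) = Module.finrank L (Matrix (Fin 2) (Fin 2) L) := by
    rw [Module.finrank_baseChange, QuaternionAlgebra.finrank_eq_four, Module.finrank_matrix]
    simp
  have hinjf : Function.Injective f :=
    (LinearMap.injective_iff_surjective_of_finrank_eq_finrank (f := f.toLinearMap) hfr).mpr hsurj
  refine ⟨AlgEquiv.ofBijective f ⟨hinjf, hsurj⟩, ?_, ?_, ?_⟩
  · exact hfi
  · exact hfj
  · exact hfk
end
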